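/- Let ν > 0, κ > 0, and r > 0, and let A = [[0, −r], [κ r, ν r]]. Then every entry of e^{−tA} is bounded in absolute value by C e^{−c min(1, 4κ/ν²) ν r t} for constants C, c > 0 depending only on ν, κ. -/

import Mathlib

noncomputable section

open Matrix

open Matrix NormedSpace
open scoped Nat

namespace Stmt11Aux

/-- even part auxiliary series -/
def F (d : ℝ) : ℝ := ∑' k : ℕ, d ^ k / (2 * k)!

/-- odd part auxiliary series -/
def G (d : ℝ) : ℝ := ∑' k : ℕ, d ^ k / (2 * k + 1)!

lemma summableF (d : ℝ) : Summable (fun k : ℕ => d ^ k / (2 * k)!) := by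
  refine Summable.of_norm (Summable.of_nonneg_of_le (fun k => norm_nonneg _) ?_
    (Real.summable_pow_div_factorial |d|))
  intro k
  rw [norm_div, norm_pow, Real.norm_eq_abs, Real.norm_natCast]
  gcongr
  omega

lemma summableG (d : ℝ) : Summable (fun k : ℕ => d ^ k / (2 * k + 1)!) := by
  refine Summable.of_norm (Summable.of_nonneg_of_le (fun k => norm_nonneg _) ?_
    (Real.summable_pow_div_factorial |d|))
  intro k
  rw [norm_div, norm_pow, Real.norm_eq_abs, Real.norm_natCast]
  gcongr
  omega


abbrev Mat := Matrix (Fin 2) (Fin 2) ℝ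

lemma exp_smul_one (a : ℝ) : exp (a • (1 : Mat)) = Real.exp a • (1 : Mat) := by
  rw [exp_eq_tsum ℝ]
  refine HasSum.tsum_eq ?_
  have h1 : HasSum (fun n : ℕ => a ^ n / n !) (Real.exp a) := by
    have := (Real.summable_pow_div_factorial a).hasSum
    rwa [show (∑' n : ℕ, a ^ n / n !) = Real.exp a by
      rw [Real.exp_eq_exp_ℝ, exp_eq_tsum_div]] at this
  have h := h1.smul_const (1 : Mat)
  convert h using 2 with n
  case e'_3 => rfl
  rw [smul_pow, one_pow, smul_smul, div_eq_inv_mul]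

lemma exp_eq_of_sq (x : Mat) (d : ℝ) (h : x * x = d • (1 : Mat)) :
    exp x = F d • (1 : Mat) + G d • x := by
  have hsq : x ^ 2 = d • (1 : Mat) := by rw [sq]; exact h
  have hpe : ∀ k : ℕ, x ^ (2 * k) = d ^ k • (1 : Mat) := by
    intro k
    induction k with
    | zero => simp
    | succ n ih =>
      have : 2 * (n + 1) = 2 * n + 2 := by ring
      rw [this, pow_add, ih, hsq, smul_mul_smul_comm, one_mul, pow_succ]
  have hpo : ∀ k : ℕ, x ^ (2 * k + 1) = d ^ k • x := by
    intro k
    rw [pow_add, hpe, pow_one, smul_mul_assoc, one_mul]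
  rw [exp_eq_tsum ℝ]
  refine HasSum.tsum_eq ?_
  have he : HasSum (fun k : ℕ => (((2 * k)! : ℝ)⁻¹) • x ^ (2 * k)) (F d • (1 : Mat)) := by
    have := (summableF d).hasSum.smul_const (1 : Mat)
    convert this using 2 with k
    rw [hpe, smul_smul, div_eq_inv_mul]
    rfl
  have ho : HasSum (fun k : ℕ => (((2 * k + 1)! : ℝ)⁻¹) • x ^ (2 * k + 1)) (G d • x) := by
    have := (summableG d).hasSum.smul_const x
    convert this using 2 with k
    rw [hpo, smul_smul, div_eq_inv_mul]
    rfl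
  exact HasSum.even_add_odd he ho


lemma F_eq_cos (v : ℝ) : F (-(v ^ 2)) = Real.cos v := by
  rw [Real.cos_eq_tsum, F]
  congr 1 with k
  rw [show ((-(v ^ 2)) : ℝ) ^ k = (-1) ^ k * v ^ (2 * k) by rw [neg_pow, ← pow_mul]]

lemma G_eq_sin (v : ℝ) (hv : v ≠ 0) : G (-(v ^ 2)) = Real.sin v / v := by
  have hs : Real.sin v = v * G (-(v ^ 2)) := by
    rw [Real.sin_eq_tsum, G, ← tsum_mul_left]
    congr 1 with k
    rw [show ((-(v ^ 2)) : ℝ) ^ k = (-1) ^ k * v ^ (2 * k) by rw [neg_pow, ← pow_mul]]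
    rw [pow_succ]
    ring
  rw [hs]
  field_simp

lemma abs_F_nonpos {u : ℝ} (h : u ≤ 0) : |F u| ≤ 1 := by
  have hv : u = -(Real.sqrt (-u) ^ 2) := by
    rw [Real.sq_sqrt (by linarith)]; ring
  rw [hv, F_eq_cos]
  exact Real.abs_cos_le_one _

lemma G_zero : G 0 = 1 := by
  rw [G]
  rw [tsum_eq_single 0 (by intro k hk; simp [zero_pow hk])]
  norm_num

lemma abs_G_nonpos {u : ℝ} (h : u ≤ 0) : |G u| ≤ 1 := by
  rcases eq_or_lt_of_le h with rfl | hlt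
  · rw [G_zero]; norm_num
  · have hv0 : 0 < Real.sqrt (-u) := Real.sqrt_pos.2 (by linarith)
    have hv : u = -(Real.sqrt (-u) ^ 2) := by
      rw [Real.sq_sqrt (by linarith)]; ring
    rw [hv, G_eq_sin _ (ne_of_gt hv0), abs_div, abs_of_pos hv0, div_le_one hv0]
    calc |Real.sin (Real.sqrt (-u))| ≤ |Real.sqrt (-u)| := Real.abs_sin_le_abs
      _ = Real.sqrt (-u) := abs_of_pos hv0

lemma F_nonneg {u : ℝ} (h : 0 ≤ u) : 0 ≤ F u :=
  tsum_nonneg fun k => div_nonneg (pow_nonneg h k) (Nat.cast_nonneg _)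

lemma G_nonneg {u : ℝ} (h : 0 ≤ u) : 0 ≤ G u :=
  tsum_nonneg fun k => div_nonneg (pow_nonneg h k) (Nat.cast_nonneg _)

lemma G_le_F {u : ℝ} (h : 0 ≤ u) : G u ≤ F u := by
  refine Summable.tsum_le_tsum (fun k => ?_) (summableG u) (summableF u)
  gcongr
  omega

lemma F_le_exp {u : ℝ} (h : 0 ≤ u) : F u ≤ Real.exp (Real.sqrt u) := by
  set v := Real.sqrt u with hvdef
  have hv : 0 ≤ v := Real.sqrt_nonneg u
  have hvu : v ^ 2 = u := Real.sq_sqrt h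
  have hexp : Real.exp v = ∑' n : ℕ, v ^ n / n ! := by
    rw [Real.exp_eq_exp_ℝ, exp_eq_tsum_div]
  rw [hexp, F]
  refine Summable.tsum_le_tsum_of_inj (fun k => 2 * k) (mul_right_injective₀ two_ne_zero)
    (fun c _ => div_nonneg (pow_nonneg hv c) (Nat.cast_nonneg _)) (fun k => ?_)
    (summableF u) (Real.summable_pow_div_factorial v)
  rw [pow_mul, hvu]

end Stmt11Aux

set_option maxHeartbeats 1000000 in
/-- Uniform exponential decay of the matrix exponential of the Fourier symbol
`A = [[0,−r],[κr,νr]]` of the linearized Korteweg system: every entry of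
`e^{−tA}` is bounded by `C e^{−c·min(1,4κ/ν²)·ν·r·t}`, with `C, c > 0`
depending only on `ν, κ`. -/
theorem stmt11 (ν κ : ℝ) (hν : 0 < ν) (hκ : 0 < κ) :
    ∃ C > (0:ℝ), ∃ c > (0:ℝ), ∀ r > (0:ℝ), ∀ t ≥ (0:ℝ), ∀ i j : Fin 2,
      |NormedSpace.exp (-(t • !![0, -r; κ * r, ν * r])) i j|
        ≤ C * Real.exp (-c * min 1 (4 * κ / ν ^ 2) * ν * r * t) := by
  set d : ℝ := ν ^ 2 / 4 - κ with hdd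
  set K : ℝ := ν + κ + 1 with hK
  set ε : ℝ := min (3 * ν / 8) (κ / (2 * ν)) with hε
  have hεpos : 0 < ε := lt_min (by positivity) (by positivity)
  have hKpos : 0 < K := by positivity
  set m : ℝ := min 1 (4 * κ / ν ^ 2) with hm
  set ρ : ℝ := Real.sqrt (max d 0) with hρ
  -- the key scalar inequality
  have hkey : ρ + ε + m * ν / 8 ≤ ν / 2 := by
    rcases le_or_gt d 0 with hd0 | hd0
    · have hρ0 : ρ = 0 := by rw [hρ, max_eq_right hd0, Real.sqrt_zero]
      have h1 : ε ≤ 3 * ν / 8 := min_le_left _ _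
      have h2 : m ≤ 1 := min_le_left _ _
      have h3 : 0 < m := lt_min one_pos (by positivity)
      nlinarith
    · have hd0' : 0 < ν ^ 2 / 4 - κ := hdd ▸ hd0
      have hρ1 : ρ ≤ ν / 2 - κ / ν := by
        have h1 : 0 ≤ ν / 2 - κ / ν := by
          rw [sub_nonneg, div_le_div_iff₀ hν (by norm_num)]
          nlinarith [hd0']
        rw [hρ, max_eq_left hd0.le]
        calc Real.sqrt d ≤ Real.sqrt ((ν / 2 - κ / ν) ^ 2) := by
              apply Real.sqrt_le_sqrt
              rw [hdd]
              have : (ν / 2 - κ / ν) ^ 2 = ν ^ 2 / 4 - κ + (κ / ν) ^ 2 := by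
                field_simp; ring
              nlinarith [sq_nonneg (κ / ν)]
          _ = ν / 2 - κ / ν := Real.sqrt_sq h1
      have hm1 : m = 4 * κ / ν ^ 2 := by
        rw [hm, min_eq_right]
        rw [div_le_one (by positivity)]
        nlinarith [hd0']
      have h2 : ε ≤ κ / (2 * ν) := min_le_right _ _
      have h3 : m * ν / 8 = κ / (2 * ν) := by rw [hm1]; field_simp; ring
      have h4 : κ / (2 * ν) + κ / (2 * ν) = κ / ν := by field_simp; ring
      linarith
  refine ⟨1 + K / ε, by positivity, 1 / 8, by norm_num, ?_⟩
  intro r hr t ht i j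
  set s : ℝ := r * t with hs
  have hs0 : 0 ≤ s := mul_nonneg hr.le ht
  set M : Stmt11Aux.Mat := !![ν / 2, 1; -κ, -ν / 2] with hM
  set u : ℝ := s ^ 2 * d with hu
  -- decompose the matrix
  have hsplit : -(t • !![0, -r; κ * r, ν * r]) = (-(ν / 2 * s)) • (1 : Stmt11Aux.Mat) + s • M := by
    ext i j
    fin_cases i <;> fin_cases j <;>
      simp [hM, Matrix.one_apply, hs] <;> ring
  have hsq : (s • M) * (s • M) = u • (1 : Stmt11Aux.Mat) := by
    have hMM : M * M = d • (1 : Stmt11Aux.Mat) := by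
      ext i j
      fin_cases i <;> fin_cases j <;>
        simp [hM, Matrix.mul_apply, Fin.sum_univ_two, Matrix.one_apply, hdd] <;> ring
    rw [smul_mul_smul_comm, hMM, smul_smul, hu, sq]
  have hcomm : Commute ((-(ν / 2 * s)) • (1 : Stmt11Aux.Mat)) (s • M) :=
    (Commute.one_left (s • M)).smul_left _
  have hexp : NormedSpace.exp (-(t • !![0, -r; κ * r, ν * r]))
      = Real.exp (-(ν / 2 * s)) •
        (Stmt11Aux.F u • (1 : Stmt11Aux.Mat) + Stmt11Aux.G u • (s • M)) := by
    rw [hsplit, Matrix.exp_add_of_commute _ _ hcomm, Stmt11Aux.exp_smul_one,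
      Stmt11Aux.exp_eq_of_sq _ _ hsq, smul_mul_assoc, one_mul]
  -- bounds on F u and G u
  have hFu : |Stmt11Aux.F u| ≤ Real.exp (ρ * s) := by
    rcases le_or_gt d 0 with hd0 | hd0
    · have hρ0 : ρ = 0 := by rw [hρ, max_eq_right hd0, Real.sqrt_zero]
      rw [hρ0, zero_mul, Real.exp_zero]
      exact Stmt11Aux.abs_F_nonpos (by nlinarith [sq_nonneg s])
    · have hu0 : 0 ≤ u := by positivity
      have hsu : Real.sqrt u = ρ * s := by
        rw [hρ, max_eq_left hd0.le, hu, mul_comm (s ^ 2) d, Real.sqrt_mul hd0.le,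
          Real.sqrt_sq hs0, mul_comm]
      rw [abs_of_nonneg (Stmt11Aux.F_nonneg hu0), ← hsu]
      exact Stmt11Aux.F_le_exp hu0
  have hGu : |Stmt11Aux.G u| ≤ Real.exp (ρ * s) := by
    rcases le_or_gt d 0 with hd0 | hd0
    · have hρ0 : ρ = 0 := by rw [hρ, max_eq_right hd0, Real.sqrt_zero]
      rw [hρ0, zero_mul, Real.exp_zero]
      exact Stmt11Aux.abs_G_nonpos (by nlinarith [sq_nonneg s])
    · have hu0 : 0 ≤ u := by positivity
      have hsu : Real.sqrt u = ρ * s := by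
        rw [hρ, max_eq_left hd0.le, hu, mul_comm (s ^ 2) d, Real.sqrt_mul hd0.le,
          Real.sqrt_sq hs0, mul_comm]
      rw [abs_of_nonneg (Stmt11Aux.G_nonneg hu0), ← hsu]
      exact le_trans (Stmt11Aux.G_le_F hu0) (Stmt11Aux.F_le_exp hu0)
  -- entrywise bounds
  have hone : |(1 : Stmt11Aux.Mat) i j| ≤ 1 := by
    fin_cases i <;> fin_cases j <;> simp [Matrix.one_apply]
  have hMij : |M i j| ≤ K := by
    rw [hM, hK]
    fin_cases i <;> fin_cases j <;> rw [abs_le] <;> norm_num [Matrix.of_apply] <;>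
      constructor <;> nlinarith
  -- putting it together
  rw [hexp]
  have hval : (Real.exp (-(ν / 2 * s)) •
        (Stmt11Aux.F u • (1 : Stmt11Aux.Mat) + Stmt11Aux.G u • (s • M))) i j
      = Real.exp (-(ν / 2 * s)) *
        (Stmt11Aux.F u * (1 : Stmt11Aux.Mat) i j + Stmt11Aux.G u * (s * M i j)) := by
    simp [Matrix.smul_apply, Matrix.add_apply, smul_eq_mul]
  rw [hval, abs_mul, abs_of_pos (Real.exp_pos _)]
  have hstep1 : |Stmt11Aux.F u * (1 : Stmt11Aux.Mat) i j + Stmt11Aux.G u * (s * M i j)|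
      ≤ Real.exp (ρ * s) * (1 + K * s) := by
    calc |Stmt11Aux.F u * (1 : Stmt11Aux.Mat) i j + Stmt11Aux.G u * (s * M i j)|
        ≤ |Stmt11Aux.F u * (1 : Stmt11Aux.Mat) i j| + |Stmt11Aux.G u * (s * M i j)| :=
          abs_add_le _ _
      _ = |Stmt11Aux.F u| * |(1 : Stmt11Aux.Mat) i j| + |Stmt11Aux.G u| * (s * |M i j|) := by
          rw [abs_mul, abs_mul, abs_mul, abs_of_nonneg hs0]
      _ ≤ Real.exp (ρ * s) * 1 + Real.exp (ρ * s) * (s * K) := by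
          gcongr
      _ = Real.exp (ρ * s) * (1 + K * s) := by ring
  calc Real.exp (-(ν / 2 * s)) *
        |Stmt11Aux.F u * (1 : Stmt11Aux.Mat) i j + Stmt11Aux.G u * (s * M i j)|
      ≤ Real.exp (-(ν / 2 * s)) * (Real.exp (ρ * s) * (1 + K * s)) := by gcongr
    _ = (1 + K * s) * Real.exp ((ρ - ν / 2) * s) := by
        rw [show (ρ - ν / 2) * s = -(ν / 2 * s) + ρ * s by ring, Real.exp_add]; ring
    _ ≤ ((1 + K / ε) * Real.exp (ε * s)) * Real.exp ((ρ - ν / 2) * s) := by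
        have he := Real.add_one_le_exp (ε * s)
        have hdiv : K / ε * ε = K := div_mul_cancel₀ K (ne_of_gt hεpos)
        have hA : (0:ℝ) ≤ 1 + K / ε := by positivity
        have hB : (0:ℝ) ≤ Real.exp (ε * s) - (1 + ε * s) := by linarith
        have hC : (K / ε) * (ε * s) = K * s := by
          rw [show (K / ε) * (ε * s) = (K / ε * ε) * s by ring, hdiv]
        have h1 : 1 + K * s ≤ (1 + K / ε) * Real.exp (ε * s) := by
          nlinarith [mul_nonneg hA hB, hC, mul_nonneg hεpos.le hs0,
            div_nonneg hKpos.le hεpos.le]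
        exact mul_le_mul_of_nonneg_right h1 (Real.exp_pos _).le
    _ = (1 + K / ε) * Real.exp ((ε + (ρ - ν / 2)) * s) := by
        rw [show (ε + (ρ - ν / 2)) * s = ε * s + (ρ - ν / 2) * s by ring, Real.exp_add]; ring
    _ ≤ (1 + K / ε) * Real.exp (-(1 / 8) * m * ν * r * t) := by
        have hexpo : (ε + (ρ - ν / 2)) * s ≤ -(1 / 8) * m * ν * r * t := by
          have h2 : -(1 / 8) * m * ν * r * t = (-(m * ν / 8)) * s := by rw [hs]; ring
          rw [h2]
          apply mul_le_mul_of_nonneg_right _ hs0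
          linarith [hkey]
        exact mul_le_mul_of_nonneg_left (Real.exp_le_exp.mpr hexpo) (by positivity)
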